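/- Let K be a field with a field topology τ satisfying the polynomial implicit function theorem. If τ is not discrete, then K is large: for every polynomial f ∈ K[x,y] and (a,b) ∈ K² with f(a,b)=0 and ∂f/∂y(a,b) ≠ 0, the polynomial f has infinitely many zeros in K². -/

import Mathlib

open MvPolynomial

/-- A topology on a field `K` satisfies the polynomial implicit function theorem if
whenever a tuple of polynomials `f` in variables `x_1,…,x_m,y_1,…,y_n` vanishes at `(a,b)`
with invertible Jacobian in the `y` variables, there is a continuous local implicit
function `s` with `s a = b` solving `f(x, s x) = 0`. -/
def SatisfiesPolyImplicitFT (K : Type*) [Field K] [TopologicalSpace K] : Prop :=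
  ∀ (m n : ℕ) (f : Fin n → MvPolynomial (Fin m ⊕ Fin n) K) (a : Fin m → K) (b : Fin n → K),
    (∀ i, eval (Sum.elim a b) (f i) = 0) →
    IsUnit (Matrix.of fun i j : Fin n => eval (Sum.elim a b) (pderiv (Sum.inr j) (f i))) →
    ∃ P : Set (Fin m → K), ∃ S : Set (Fin n → K), IsOpen P ∧ IsOpen S ∧ a ∈ P ∧ b ∈ S ∧
      ∃ s : (Fin m → K) → (Fin n → K), ContinuousOn s P ∧ s a = b ∧
        ∀ a' ∈ P, s a' ∈ S ∧ ∀ i, eval (Sum.elim a' (s a')) (f i) = 0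

lemma open_infinite (K : Type*) [Field K] [TopologicalSpace K] [IsTopologicalRing K] [T2Space K]
    (hnd : ¬ DiscreteTopology K) (U : Set K) (hU : IsOpen U) (x : K) (hx : x ∈ U) :
    U.Infinite := by
  by_contra hfin
  rw [Set.not_infinite] at hfin
  apply hnd
  rw [discreteTopology_iff_isOpen_singleton]
  intro y
  have h1 : IsOpen ({x} : Set K) := by
    have : ({x} : Set K) = U \ (U \ {x}) := by
      ext z; simp (config := {contextual := true}) [hx]
    rw [this]
    exact hU.sdiff (hfin.diff (t := {x})).isClosed
  have := (Homeomorph.addRight (y - x)).isOpenMap _ h1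
  simpa using this

/-- if a (Hausdorff) field topology on `K` satisfies the polynomial implicit
function theorem and is not discrete, then `K` is large: every `f ∈ K[x,y]` with a zero
`(a,b)` at which `∂f/∂y ≠ 0` has infinitely many zeros in `K²`. -/
theorem stmt_2 (K : Type*) [Field K] [TopologicalSpace K] [IsTopologicalRing K] [T2Space K]
    (hinv : ContinuousOn (fun x : K => x⁻¹) {0}ᶜ)
    (hIFT : SatisfiesPolyImplicitFT K)
    (hnd : ¬ DiscreteTopology K) :
    ∀ (f : MvPolynomial (Fin 2) K) (a b : K),
      eval ![a, b] f = 0 → eval ![a, b] (pderiv 1 f) ≠ 0 →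
      {z : Fin 2 → K | eval z f = 0}.Infinite := by
  intro f a b hz hd
  set σ : Fin 2 → Fin 1 ⊕ Fin 1 := fun i => (finSumFinEquiv (m := 1) (n := 1)).symm (Fin.cast rfl i)
  have hσ : Function.Injective σ := fun i j h => by simpa using (finSumFinEquiv.symm.injective h)
  set g : MvPolynomial (Fin 1 ⊕ Fin 1) K := rename σ f with hg
  have hcomp : ∀ (u v : K), (Sum.elim (fun _ : Fin 1 => u) (fun _ : Fin 1 => v)) ∘ σ = ![u, v] := by
    intro u v
    funext i
    fin_cases i <;> rfl
  have hevg : ∀ (u v : K) (p : MvPolynomial (Fin 2) K),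
      eval (Sum.elim (fun _ : Fin 1 => u) (fun _ : Fin 1 => v)) (rename σ p) = eval ![u, v] p := by
    intro u v p
    rw [eval_rename, hcomp]
  have hσ1 : σ 1 = Sum.inr 0 := rfl
  have hpd : pderiv (Sum.inr (0 : Fin 1)) g = rename σ (pderiv 1 f) := by
    rw [hg, ← hσ1, pderiv_rename hσ]
  obtain ⟨P, S, hP, hS, haP, hbS, s, hcont, hsa, hsol⟩ :=
    hIFT 1 1 (fun _ => g) (fun _ => a) (fun _ => b)
      (fun i => by rw [hevg]; exact hz)
      (by
        rw [Matrix.isUnit_iff_isUnit_det, Matrix.det_fin_one]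
        simp only [Matrix.of_apply]
        rw [hpd, hevg]
        exact hd.isUnit)
  -- P is infinite
  have hPinf : P.Infinite := by
    have hhomeo := Homeomorph.funUnique (Fin 1) K
    by_contra hfin
    rw [Set.not_infinite] at hfin
    have : (hhomeo '' P).Finite := hfin.image _
    exact (open_infinite K hnd _ (hhomeo.isOpenMap _ hP) _ ⟨_, haP, rfl⟩) this
  -- map P into the zero set
  have key : ∀ p ∈ P, (Sum.elim p (s p)) ∘ σ ∈ {z : Fin 2 → K | eval z f = 0} := by
    intro p hp
    have := (hsol p hp).2 0
    rw [hg, eval_rename] at this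
    exact this
  have hinj : Set.InjOn (fun p : Fin 1 → K => (Sum.elim p (s p)) ∘ σ) P := by
    intro p _ q _ h
    funext i
    have h0 := congrFun h 0
    simp only [Function.comp_apply] at h0
    have hσ0 : σ 0 = Sum.inl 0 := rfl
    rw [hσ0] at h0
    simpa [Fin.eq_zero i] using h0
  exact Set.Infinite.mono (Set.image_subset_iff.mpr key) ((hPinf.image hinj))
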